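/- For all real parameters a > 0, b > 1, T > 0, one has limsup_{χ→+∞} G_{a,b,T}(χ) = +∞ and liminf_{χ→+∞} G_{a,b,T}(χ) = −∞. -/

import Mathlib

open Real Filter Set

/-- Breakpoints `s_n(b,T) = T·π·(b^n − 1)/(b − 1)`. -/
noncomputable def brk (b T : ℝ) (n : ℕ) : ℝ := T * Real.pi * (b ^ n - 1) / (b - 1)

/-- Index of the segment containing `x ≥ 0`: the unique `m` with `s_m ≤ x < s_{m+1}`
(for `b > 1`, `T > 0`). -/
noncomputable def seg (b T x : ℝ) : ℕ := sInf {n : ℕ | x < brk b T (n + 1)}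

/-- The saturated Nussbaum function `N_{a,b,T}`: on `[s_{n−1}, s_n)` (with `m = n − 1`)
it equals `(−1)^m·a·cos((χ − s_m)/(b^m·T))`, extended evenly to `χ < 0`. -/
noncomputable def satN (a b T : ℝ) (χ : ℝ) : ℝ :=
  (-1 : ℝ) ^ (seg b T |χ|) * a *
    Real.cos ((|χ| - brk b T (seg b T |χ|)) / (b ^ (seg b T |χ|) * T))

/-- The integrated function `G_{a,b,T}(χ) = ∫_0^χ N_{a,b,T}(τ) dτ`. -/
noncomputable def satG (a b T : ℝ) (χ : ℝ) : ℝ := ∫ τ in (0:ℝ)..χ, satN a b T τ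

section aux

variable {a b T : ℝ}

lemma brk_zero (b T : ℝ) : brk b T 0 = 0 := by simp [brk]

lemma brk_strictMono (hb : 1 < b) (hT : 0 < T) : StrictMono (brk b T) := by
  intro n m h
  have h1 : b ^ n < b ^ m := pow_lt_pow_right₀ hb h
  have h2 : (0:ℝ) < b - 1 := by linarith
  have h3 : (0:ℝ) < T * Real.pi := mul_pos hT Real.pi_pos
  unfold brk
  rw [div_lt_div_iff₀ h2 h2]
  nlinarith [mul_pos h3 h2, mul_lt_mul_of_pos_right (mul_lt_mul_of_pos_left h1 h3) h2]

lemma brk_nonneg (hb : 1 < b) (hT : 0 < T) (n : ℕ) : 0 ≤ brk b T n := by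
  have h2 : (0:ℝ) ≤ b - 1 := by linarith
  have h1 : (1:ℝ) ≤ b ^ n := one_le_pow₀ hb.le
  exact div_nonneg (mul_nonneg (mul_nonneg hT.le Real.pi_pos.le) (by linarith)) h2

lemma brk_succ (hb : 1 < b) (n : ℕ) :
    brk b T (n + 1) = brk b T n + Real.pi * (b ^ n * T) := by
  have h2 : b - 1 ≠ 0 := by intro h; linarith [hb]
  unfold brk
  field_simp
  ring

lemma seg_eq (hb : 1 < b) (hT : 0 < T) {m : ℕ} {x : ℝ}
    (h1 : brk b T m ≤ x) (h2 : x < brk b T (m + 1)) : seg b T x = m := by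
  have hmem : m ∈ {n : ℕ | x < brk b T (n + 1)} := h2
  have hne : {n : ℕ | x < brk b T (n + 1)}.Nonempty := ⟨m, hmem⟩
  have hj : sInf {n : ℕ | x < brk b T (n + 1)} ∈ _ := Nat.sInf_mem hne
  have hle : seg b T x ≤ m := Nat.sInf_le hmem
  have hge : m ≤ seg b T x := by
    by_contra hc
    push_neg at hc
    have : brk b T (seg b T x + 1) ≤ brk b T m :=
      (brk_strictMono hb hT).monotone (by omega)
    exact absurd (lt_of_lt_of_le hj this) (not_lt.2 h1)
  omega

lemma satN_eq (a : ℝ) (hb : 1 < b) (hT : 0 < T) {m : ℕ} {x : ℝ}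
    (h1 : brk b T m ≤ x) (h2 : x < brk b T (m + 1)) :
    satN a b T x = (-1 : ℝ) ^ m * a * Real.cos ((x - brk b T m) / (b ^ m * T)) := by
  have hx0 : 0 ≤ x := le_trans (brk_nonneg hb hT m) h1
  rw [satN, abs_of_nonneg hx0, seg_eq hb hT h1 h2]

lemma piece (a : ℝ) (hb : 1 < b) (hT : 0 < T) (m : ℕ) {y : ℝ}
    (hy1 : brk b T m ≤ y) (hy2 : y ≤ brk b T (m + 1)) :
    IntervalIntegrable (satN a b T) MeasureTheory.volume (brk b T m) y ∧
      ∫ τ in brk b T m..y, satN a b T τ =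
        (-1 : ℝ) ^ m * a * (b ^ m * T) * Real.sin ((y - brk b T m) / (b ^ m * T)) := by
  set s := brk b T m with hs
  set c : ℝ := b ^ m * T with hc
  have hcpos : 0 < c := mul_pos (pow_pos (by linarith) m) hT
  set g : ℝ → ℝ := fun x => (-1 : ℝ) ^ m * a * Real.cos ((x - s) / c) with hg
  have hgcont : Continuous g := by
    apply Continuous.mul continuous_const
    exact Real.continuous_cos.comp ((continuous_id.sub continuous_const).div_const c)
  have hae : ∀ᵐ x ∂(MeasureTheory.volume : MeasureTheory.Measure ℝ),
      x ∈ Set.uIoc s y → satN a b T x = g x := by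
    have h0 : (MeasureTheory.volume : MeasureTheory.Measure ℝ) {brk b T (m + 1)} = 0 :=
      MeasureTheory.measure_singleton _
    filter_upwards [MeasureTheory.compl_mem_ae_iff.2 h0] with x hx hxI
    have hIy : Set.uIoc s y = Set.Ioc s y := Set.uIoc_of_le hy1
    rw [hIy] at hxI
    have hx1 : s ≤ x := hxI.1.le
    have hx2 : x < brk b T (m + 1) :=
      lt_of_le_of_ne (le_trans hxI.2 hy2) (by simpa using hx)
    exact satN_eq a hb hT hx1 hx2
  have hgi : IntervalIntegrable g MeasureTheory.volume s y := hgcont.intervalIntegrable s y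
  have hsatNi : IntervalIntegrable (satN a b T) MeasureTheory.volume s y := by
    rw [intervalIntegrable_iff] at hgi ⊢
    apply hgi.congr_fun_ae
    exact ((MeasureTheory.ae_restrict_iff' measurableSet_uIoc).2
      (hae.mono fun x hx hxI => (hx hxI).symm))
  refine ⟨hsatNi, ?_⟩
  rw [intervalIntegral.integral_congr_ae hae]
  have hF : ∀ x ∈ Set.uIcc s y, HasDerivAt
      (fun x => (-1 : ℝ) ^ m * a * c * Real.sin ((x - s) / c)) (g x) x := by
    intro x _
    have h1 : HasDerivAt (fun x : ℝ => (x - s) / c) (1 / c) x := by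
      simpa using ((hasDerivAt_id x).sub_const s).div_const c
    have h2 := (Real.hasDerivAt_sin ((x - s) / c)).comp x h1
    have h3 := h2.const_mul ((-1 : ℝ) ^ m * a * c)
    refine h3.congr_deriv ?_
    rw [hg]
    field_simp
  rw [intervalIntegral.integral_eq_sub_of_hasDerivAt hF hgi]
  simp

lemma satG_brk (a : ℝ) (hb : 1 < b) (hT : 0 < T) (m : ℕ) :
    IntervalIntegrable (satN a b T) MeasureTheory.volume 0 (brk b T m) ∧
      satG a b T (brk b T m) = 0 := by
  induction m with
  | zero =>
    constructor
    · rw [brk_zero]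
    · rw [brk_zero, satG, intervalIntegral.integral_same]
  | succ m ih =>
    have hlt : brk b T m < brk b T (m + 1) := brk_strictMono hb hT (Nat.lt_succ_self m)
    obtain ⟨hint, hval⟩ := piece a hb hT m le_rfl (le_of_lt hlt) |>.imp id id
    have hp := piece a hb hT m hlt.le le_rfl
    have hadd := intervalIntegral.integral_add_adjacent_intervals ih.1 hp.1
    constructor
    · exact ih.1.trans hp.1
    · rw [satG, ← hadd]
      have hdiff : brk b T (m + 1) - brk b T m = Real.pi * (b ^ m * T) := by
        rw [brk_succ hb]; ring
      have : (brk b T (m+1) - brk b T m) / (b ^ m * T) = Real.pi := by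
        rw [hdiff]; field_simp
      rw [hp.2, this, Real.sin_pi]
      have := ih.2
      rw [satG] at this
      rw [this]
      ring

lemma satG_mid (a : ℝ) (hb : 1 < b) (hT : 0 < T) (m : ℕ) :
    satG a b T (brk b T m + Real.pi / 2 * (b ^ m * T)) =
      (-1 : ℝ) ^ m * a * (b ^ m * T) := by
  set c : ℝ := b ^ m * T with hc
  have hcpos : 0 < c := mul_pos (pow_pos (by linarith) m) hT
  set y := brk b T m + Real.pi / 2 * c with hy
  have hy1 : brk b T m ≤ y := by
    rw [hy]; nlinarith [Real.pi_pos]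
  have hy2 : y ≤ brk b T (m + 1) := by
    rw [hy, brk_succ hb, ← hc]
    nlinarith [Real.pi_pos]
  have hp := piece a hb hT m hy1 hy2
  have hb0 := satG_brk a hb hT m
  have hadd := intervalIntegral.integral_add_adjacent_intervals hb0.1 hp.1
  rw [satG, ← hadd]
  have h1 : (y - brk b T m) / c = Real.pi / 2 := by
    rw [hy]; field_simp; ring
  rw [hp.2, ← hc, h1, Real.sin_pi_div_two]
  have := hb0.2
  rw [satG] at this
  rw [this]
  ring

end aux

/-- `limsup_{χ→+∞} G = +∞` and `liminf_{χ→+∞} G = −∞`. -/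
theorem satG_limsup_liminf (a b T : ℝ) (ha : 0 < a) (hb : 1 < b) (hT : 0 < T) :
    Filter.limsup (fun χ : ℝ => ((satG a b T χ : ℝ) : EReal)) Filter.atTop = ⊤ ∧
    Filter.liminf (fun χ : ℝ => ((satG a b T χ : ℝ) : EReal)) Filter.atTop = ⊥ := by
  have hb0 : (0:ℝ) < b := by linarith
  have hpow : Tendsto (fun k : ℕ => (b ^ 2) ^ k) atTop atTop :=
    tendsto_pow_atTop_atTop_of_one_lt (by nlinarith)
  set f : ℝ → EReal := fun χ : ℝ => ((satG a b T χ : ℝ) : EReal) with hf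
  constructor
  · -- limsup = ⊤
    set u : ℕ → ℝ := fun k => brk b T (2 * k) + Real.pi / 2 * (b ^ (2 * k) * T) with hu
    have hval : ∀ k, satG a b T (u k) = a * (b ^ (2 * k) * T) := by
      intro k
      have h := satG_mid a hb hT (2 * k)
      have e : ((-1:ℝ)) ^ (2 * k) = 1 := by rw [pow_mul]; norm_num
      rw [e, one_mul] at h
      exact h
    have hgrow : Tendsto (fun k : ℕ => a * (b ^ (2 * k) * T)) atTop atTop := by
      apply (hpow.atTop_mul_const (mul_pos ha hT)).congr
      intro k; rw [pow_mul]; ring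
    have hut : Tendsto u atTop atTop := by
      apply tendsto_atTop_mono ?_ (hpow.atTop_mul_const
        (mul_pos (by positivity : (0:ℝ) < Real.pi / 2) hT))
      intro k
      have h0 := brk_nonneg hb hT (2 * k)
      rw [hu]
      simp only []
      rw [pow_mul]
      nlinarith
    have htend : Tendsto (fun k => f (u k)) atTop (nhds ⊤) := by
      rw [EReal.tendsto_nhds_top_iff_real]
      intro x
      filter_upwards [hgrow.eventually_gt_atTop x] with k hk
      show (x : EReal) < ((satG a b T (u k) : ℝ) : EReal)
      exact_mod_cast (hval k ▸ hk : x < satG a b T (u k))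
    have h1 : (⊤ : EReal) ≤ limsup f atTop := by
      calc (⊤ : EReal) = limsup (f ∘ u) atTop := htend.limsup_eq.symm
        _ = limsup f (map u atTop) := limsup_comp f u atTop
        _ ≤ limsup f atTop := limsup_le_limsup_of_le hut
    exact top_le_iff.mp h1
  · -- liminf = ⊥
    set v : ℕ → ℝ := fun k => brk b T (2 * k + 1) + Real.pi / 2 * (b ^ (2 * k + 1) * T) with hv
    have hval : ∀ k, satG a b T (v k) = -(a * (b ^ (2 * k + 1) * T)) := by
      intro k
      have h := satG_mid a hb hT (2 * k + 1)
      have e : ((-1:ℝ)) ^ (2 * k + 1) = -1 := by rw [pow_succ, pow_mul]; norm_num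
      rw [e] at h
      calc satG a b T (v k) = -1 * a * (b ^ (2 * k + 1) * T) := h
        _ = -(a * (b ^ (2 * k + 1) * T)) := by ring
    have hgrow : Tendsto (fun k : ℕ => a * (b ^ (2 * k + 1) * T)) atTop atTop := by
      apply (hpow.atTop_mul_const (mul_pos (mul_pos ha hb0) hT)).congr
      intro k
      have e : b ^ (2 * k + 1) = (b ^ 2) ^ k * b := by rw [pow_succ, pow_mul]
      rw [e]; ring
    have hvt : Tendsto v atTop atTop := by
      apply tendsto_atTop_mono ?_ (hpow.atTop_mul_const
        (mul_pos (mul_pos (by positivity : (0:ℝ) < Real.pi / 2) hb0) hT))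
      intro k
      have h0 := brk_nonneg hb hT (2 * k + 1)
      have e : b ^ (2 * k + 1) = (b ^ 2) ^ k * b := by rw [pow_succ, pow_mul]
      rw [hv]
      simp only []
      rw [e]
      nlinarith
    have htend : Tendsto (fun k => f (v k)) atTop (nhds ⊥) := by
      rw [EReal.tendsto_nhds_bot_iff_real]
      intro x
      filter_upwards [hgrow.eventually_gt_atTop (-x)] with k hk
      have hlt : satG a b T (v k) < x := by rw [hval k]; linarith
      show ((satG a b T (v k) : ℝ) : EReal) < (x : EReal)
      exact_mod_cast hlt
    have h1 : liminf f atTop ≤ (⊥ : EReal) := by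
      calc liminf f atTop ≤ liminf f (map v atTop) := liminf_le_liminf_of_le hvt
        _ = liminf (f ∘ v) atTop := (liminf_comp f v atTop).symm
        _ = ⊥ := htend.liminf_eq
    exact le_bot_iff.mp h1
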